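/- arXiv:2305.18505 — 5 statements merged into one kernel-verified Lean document; each statement's English description precedes it below -/
import Mathlib

section
/- Let λ ≥ R² and d ≥ 1. Consider vectors x¹,…,x^N ∈ ℝ^d with ‖xⁿ‖ ≤ R for all n. Define Σₙ = λI + Σ_{i<n} xⁱ(xⁱ)ᵀ. Then Σ_{n=1}^N ‖xⁿ‖²_{Σₙ⁻¹} ≤ 2d·log(1 + N/d), where ‖x‖²_A = xᵀAx. -/
open Matrix BigOperators Real

section EllipticalAux

lemma ep_dp_self_nonneg {d : ℕ} (v : Fin d → ℝ) : 0 ≤ v ⬝ᵥ v := by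
  simpa using dotProduct_star_self_nonneg v

lemma ep_dp_self_pos {d : ℕ} {v : Fin d → ℝ} (hv : v ≠ 0) : 0 < v ⬝ᵥ v := by
  rcases lt_or_eq_of_le (ep_dp_self_nonneg v) with h' | h'
  · exact h'
  · exact absurd (dotProduct_self_eq_zero.mp h'.symm) hv

lemma ep_vecMulVec_mulVec {d : ℕ} (v y : Fin d → ℝ) :
    vecMulVec v v *ᵥ y = (v ⬝ᵥ y) • v := by
  ext i
  simp only [vecMulVec_apply, mulVec, dotProduct, Pi.smul_apply, smul_eq_mul, Finset.sum_mul]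
  exact Finset.sum_congr rfl fun j _ => by ring

lemma ep_psd_vecMulVec {d : ℕ} (v : Fin d → ℝ) : (vecMulVec v v).PosSemidef := by
  refine Matrix.PosSemidef.of_dotProduct_mulVec_nonneg ?_ ?_
  · ext i j
    simp [vecMulVec_apply, conjTranspose_apply, mul_comm]
  · intro y
    rw [ep_vecMulVec_mulVec]
    simp only [star_trivial, dotProduct_smul, smul_eq_mul]
    rw [dotProduct_comm y v]
    exact mul_self_nonneg _

lemma ep_posDef_smul_one {d : ℕ} {lam : ℝ} (h : 0 < lam) :
    (lam • (1 : Matrix (Fin d) (Fin d) ℝ)).PosDef := by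
  refine Matrix.PosDef.of_dotProduct_mulVec_pos ?_ ?_
  · ext i j
    simp [conjTranspose_apply, Matrix.one_apply]
    split <;> simp_all [eq_comm]
  · intro y hy
    have h1 : (lam • (1 : Matrix (Fin d) (Fin d) ℝ)) *ᵥ y = lam • y := by
      simp [smul_mulVec]
    rw [h1]
    simp only [star_trivial, dotProduct_smul, smul_eq_mul]
    exact mul_pos h (ep_dp_self_pos hy)

lemma ep_quad_bound {d : ℕ} (lam : ℝ) (hl : 0 < lam) (B : Matrix (Fin d) (Fin d) ℝ)
    (hB : B.PosSemidef)
    (hA : (lam • (1 : Matrix (Fin d) (Fin d) ℝ) + B).PosDef) (v : Fin d → ℝ) :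
    v ⬝ᵥ (lam • (1 : Matrix (Fin d) (Fin d) ℝ) + B)⁻¹ *ᵥ v ≤ (v ⬝ᵥ v) / lam := by
  set A := lam • (1 : Matrix (Fin d) (Fin d) ℝ) + B with hAdef
  have hinv : A⁻¹.PosSemidef := hA.inv.posSemidef
  set y := A⁻¹ *ᵥ v with hy
  have hvy : A *ᵥ y = v := by
    rw [hy, mulVec_mulVec, Matrix.mul_nonsing_inv _ (isUnit_iff_ne_zero.mpr hA.det_pos.ne'),
      one_mulVec]
  set q := v ⬝ᵥ y with hq
  have hq0 : 0 ≤ q := by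
    have := hinv.dotProduct_mulVec_nonneg v
    simpa using this
  have hq1 : q = lam * (y ⬝ᵥ y) + y ⬝ᵥ B *ᵥ y := by
    rw [hq, ← hvy, dotProduct_comm, hAdef, add_mulVec, smul_mulVec, one_mulVec,
      dotProduct_add, dotProduct_smul, smul_eq_mul]
  have hyB : 0 ≤ y ⬝ᵥ B *ᵥ y := by
    have := hB.dotProduct_mulVec_nonneg y
    simpa using this
  have hyy : lam * (y ⬝ᵥ y) ≤ q := by linarith
  have hcs : q ^ 2 ≤ (v ⬝ᵥ v) * (y ⬝ᵥ y) := by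
    have := Finset.sum_mul_sq_le_sq_mul_sq Finset.univ v y
    simpa [hq, dotProduct, pow_two] using this
  rcases eq_or_lt_of_le hq0 with h0 | h0
  · rw [← h0]
    have := ep_dp_self_nonneg v
    positivity
  · have hyy' : y ⬝ᵥ y ≤ q / lam := by
      rw [le_div_iff₀ hl]; linarith
    have h1 : q ^ 2 ≤ (v ⬝ᵥ v) * (q / lam) :=
      le_trans hcs (mul_le_mul_of_nonneg_left hyy' (ep_dp_self_nonneg v))
    have h2 : q * q ≤ ((v ⬝ᵥ v) / lam) * q := by
      rw [pow_two] at h1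
      calc q * q ≤ (v ⬝ᵥ v) * (q / lam) := h1
        _ = ((v ⬝ᵥ v) / lam) * q := by ring
    exact le_of_mul_le_mul_right (by linarith) h0

lemma ep_det_one_add_vecMulVec {d : ℕ} (u w : Fin d → ℝ) :
    (1 + vecMulVec u w).det = 1 + w ⬝ᵥ u := by
  rw [vecMulVec_eq (Fin 1), Matrix.det_one_add_replicateCol_mul_replicateRow]

lemma ep_det_step {d : ℕ} (A : Matrix (Fin d) (Fin d) ℝ) (hA : A.PosDef) (v : Fin d → ℝ) :
    (A + vecMulVec v v).det = A.det * (1 + v ⬝ᵥ A⁻¹ *ᵥ v) := by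
  have hu : IsUnit A.det := isUnit_iff_ne_zero.mpr hA.det_pos.ne'
  have key : A⁻¹ * vecMulVec v v = vecMulVec (A⁻¹ *ᵥ v) v := by
    ext i j
    simp only [Matrix.mul_apply, vecMulVec_apply, mulVec, dotProduct, Finset.sum_mul]
    exact Finset.sum_congr rfl fun k _ => by ring
  nth_rewrite 1 [← Matrix.mul_one A]
  rw [← Matrix.mul_nonsing_inv_cancel_left A (vecMulVec v v) hu, ← Matrix.mul_add, det_mul,
    key, ep_det_one_add_vecMulVec]

lemma ep_trace_eq_sum_eigs {d : ℕ} (A : Matrix (Fin d) (Fin d) ℝ) (hA : A.IsHermitian) :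
    A.trace = ∑ i, hA.eigenvalues i := by
  rw [hA.trace_eq_sum_eigenvalues]
  simp

lemma ep_det_le_trace_pow {d : ℕ} (hd : 0 < d) (A : Matrix (Fin d) (Fin d) ℝ) (hA : A.PosDef) :
    A.det ≤ (A.trace / d) ^ d := by
  set μ := hA.1.eigenvalues with hmu
  have hpos : ∀ i, 0 < μ i := hA.eigenvalues_pos
  have hdet : A.det = ∏ i, μ i := by
    simpa using hA.1.det_eq_prod_eigenvalues
  have htr : A.trace = ∑ i, μ i := ep_trace_eq_sum_eigs A hA.1
  have hd' : (d : ℝ) ≠ 0 := Nat.cast_ne_zero.mpr hd.ne'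
  have hgm := Real.geom_mean_le_arith_mean_weighted Finset.univ (fun _ => (d : ℝ)⁻¹) μ
    (fun i _ => by positivity)
    (by simp [Finset.card_univ]; field_simp)
    (fun i _ => (hpos i).le)
  have hlhs : ∏ i, μ i ^ ((d : ℝ)⁻¹) = (∏ i, μ i) ^ ((d : ℝ)⁻¹) := by
    rw [← Real.finset_prod_rpow _ _ (fun i _ => (hpos i).le)]
  have hrhs : ∑ i : Fin d, (d : ℝ)⁻¹ * μ i = A.trace / d := by
    rw [← Finset.mul_sum, ← htr]; ring
  rw [hlhs, hrhs] at hgm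
  have hprod : (0:ℝ) ≤ ∏ i, μ i := Finset.prod_nonneg fun i _ => (hpos i).le
  calc A.det = (((∏ i, μ i) ^ ((d : ℝ)⁻¹)) ^ d) := by
        rw [Real.rpow_inv_natCast_pow hprod hd.ne', hdet]
    _ ≤ (A.trace / d) ^ d := pow_le_pow_left₀ (Real.rpow_nonneg hprod _) hgm d

lemma ep_le_two_log {t : ℝ} (h0 : 0 ≤ t) (h1 : t ≤ 1) : t ≤ 2 * Real.log (1 + t) := by
  have hpos : (0:ℝ) < 1 + t := by linarith
  have hlog := Real.log_le_sub_one_of_pos (show (0:ℝ) < (1 + t)⁻¹ by positivity)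
  rw [Real.log_inv] at hlog
  have hkey : t / (1 + t) ≤ Real.log (1 + t) := by
    have heq : 1 - (1 + t)⁻¹ = t / (1 + t) := by field_simp; ring
    linarith [hlog, heq]
  have h2 : t / 2 ≤ t / (1 + t) := by
    apply div_le_div_of_nonneg_left h0 hpos  -- t/(2) vs t/(1+t): need 1+t ≤ 2
    · linarith
  linarith

end EllipticalAux

section EllipticalMain

variable {d N : ℕ} (lam : ℝ) (x : Fin N → Fin d → ℝ)

/-- The running sum matrix. -/
noncomputable def epT (m : ℕ) : Matrix (Fin d) (Fin d) ℝ :=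
  lam • (1 : Matrix (Fin d) (Fin d) ℝ) +
    ∑ i ∈ Finset.univ.filter (fun i : Fin N => (i : ℕ) < m), vecMulVec (x i) (x i)

lemma epS_psd (m : ℕ) :
    (∑ i ∈ Finset.univ.filter (fun i : Fin N => (i : ℕ) < m),
      vecMulVec (x i) (x i)).PosSemidef := by
  exact Finset.sum_induction _ Matrix.PosSemidef (fun A B hA hB => hA.add hB)
    Matrix.PosSemidef.zero (fun i _ => ep_psd_vecMulVec (x i))

lemma epT_pos (hl : 0 < lam) (m : ℕ) : (epT lam x m).PosDef :=
  (ep_posDef_smul_one hl).add_posSemidef (epS_psd x m)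

lemma epT_zero : epT lam x 0 = lam • (1 : Matrix (Fin d) (Fin d) ℝ) := by
  rw [epT]
  have : Finset.univ.filter (fun i : Fin N => (i : ℕ) < 0) = ∅ := by
    ext i; simp
  rw [this, Finset.sum_empty, add_zero]

lemma ep_filter_succ (n : Fin N) (m : ℕ) (hm : (n : ℕ) = m) :
    Finset.univ.filter (fun i : Fin N => (i : ℕ) < m + 1)
      = insert n (Finset.univ.filter (fun i : Fin N => (i : ℕ) < m)) := by
  ext i
  subst hm
  simp [Nat.lt_succ_iff_lt_or_eq, Fin.ext_iff, or_comm]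
  rw [Fin.le_iff_val_le_val, Fin.lt_iff_val_lt_val]
  omega

lemma epT_succ (n : Fin N) (m : ℕ) (hm : (n : ℕ) = m) :
    epT lam x (m + 1) = epT lam x m + vecMulVec (x n) (x n) := by
  rw [epT, epT, ep_filter_succ n m hm, Finset.sum_insert (by simp [← hm])]
  abel

lemma epT_det_prod (hl : 0 < lam) (m : ℕ) (hm : m ≤ N) :
    (epT lam x m).det = lam ^ d *
      ∏ n ∈ Finset.univ.filter (fun n : Fin N => (n : ℕ) < m),
        (1 + x n ⬝ᵥ (epT lam x (n : ℕ))⁻¹ *ᵥ x n) := by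
  induction m with
  | zero =>
    rw [epT_zero]
    have : Finset.univ.filter (fun i : Fin N => (i : ℕ) < 0) = ∅ := by
      ext i; simp
    rw [this, Finset.prod_empty, Matrix.det_smul, Matrix.det_one]
    simp
  | succ m ih =>
    have hmN : m < N := hm
    set n : Fin N := ⟨m, hmN⟩ with hn
    have hnm : (n : ℕ) = m := rfl
    rw [epT_succ lam x n m hnm, ep_det_step _ (epT_pos lam x hl m) (x n),
      ih (le_of_lt hmN), ep_filter_succ n m hnm,
      Finset.prod_insert (by simp [hn]), hnm]
    ring

lemma epT_trace (m : ℕ) :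
    (epT lam x m).trace = lam * d +
      ∑ i ∈ Finset.univ.filter (fun i : Fin N => (i : ℕ) < m), (x i ⬝ᵥ x i) := by
  rw [epT, Matrix.trace_add, Matrix.trace_sum, Matrix.trace_smul, Matrix.trace_one]
  have h2 : ∀ i : Fin N, (vecMulVec (x i) (x i)).trace = x i ⬝ᵥ x i := fun i => by
    simp [Matrix.trace, Matrix.diag, vecMulVec_apply, dotProduct]
  rw [Finset.sum_congr rfl (fun i _ => h2 i)]
  simp [mul_comm]

end EllipticalMain

/-- Elliptical potential lemma. -/
theorem elliptical_potential
    (d N : ℕ) (hd : 1 ≤ d) (R lam : ℝ) (hlam : R ^ 2 ≤ lam)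
    (x : Fin N → Fin d → ℝ)
    (hx : ∀ n, Real.sqrt (x n ⬝ᵥ x n) ≤ R)
    (Sig : Fin N → Matrix (Fin d) (Fin d) ℝ)
    (hSig : ∀ n : Fin N,
      Sig n = lam • (1 : Matrix (Fin d) (Fin d) ℝ) +
        ∑ i ∈ Finset.univ.filter (· < n), vecMulVec (x i) (x i)) :
    ∑ n : Fin N, x n ⬝ᵥ (Sig n)⁻¹ *ᵥ x n ≤
      2 * d * Real.log (1 + (N : ℝ) / d) := by
  have hd1 : (1:ℝ) ≤ d := by exact_mod_cast hd
  have hd0 : (0:ℝ) < d := by linarith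
  have hN0 : (0:ℝ) ≤ N := Nat.cast_nonneg N
  have hrhs0 : 0 ≤ 2 * d * Real.log (1 + (N : ℝ) / d) := by
    have : (0:ℝ) ≤ Real.log (1 + (N : ℝ) / d) := Real.log_nonneg (le_add_of_nonneg_right (by positivity))
    positivity
  have hlam0 : 0 ≤ lam := le_trans (sq_nonneg R) hlam
  rcases eq_or_lt_of_le hlam0 with hl0 | hl
  · -- degenerate case lam = 0
    have hR : R ^ 2 = 0 := le_antisymm (hl0 ▸ hlam) (sq_nonneg R)
    have hR0 : R = 0 := pow_eq_zero_iff (by norm_num) |>.mp hR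
    have hx0 : ∀ n, x n = 0 := by
      intro n
      have h1 := hx n
      rw [hR0] at h1
      have h2 : Real.sqrt (x n ⬝ᵥ x n) = 0 := le_antisymm h1 (Real.sqrt_nonneg _)
      have h3 : x n ⬝ᵥ x n ≤ 0 := by
        by_contra h
        push_neg at h
        exact absurd h2 (Real.sqrt_pos.mpr h).ne'
      exact dotProduct_self_eq_zero.mp (le_antisymm h3 (ep_dp_self_nonneg _))
    calc ∑ n : Fin N, x n ⬝ᵥ (Sig n)⁻¹ *ᵥ x n = 0 :=
          Finset.sum_eq_zero fun n _ => by rw [hx0 n, zero_dotProduct]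
      _ ≤ _ := hrhs0
  -- main case 0 < lam
  have hxx : ∀ n, x n ⬝ᵥ x n ≤ lam := by
    intro n
    calc x n ⬝ᵥ x n = (Real.sqrt (x n ⬝ᵥ x n)) ^ 2 :=
          (Real.sq_sqrt (ep_dp_self_nonneg _)).symm
      _ ≤ R ^ 2 := pow_le_pow_left₀ (Real.sqrt_nonneg _) (hx n) 2
      _ ≤ lam := hlam
  have hSigT : ∀ n : Fin N, Sig n = epT lam x (n : ℕ) := by
    intro n
    rw [hSig n, epT]
    congr 2
  set v : Fin N → ℝ := fun n => x n ⬝ᵥ (epT lam x (n : ℕ))⁻¹ *ᵥ x n with hvdef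
  have hLHS : ∑ n : Fin N, x n ⬝ᵥ (Sig n)⁻¹ *ᵥ x n = ∑ n : Fin N, v n :=
    Finset.sum_congr rfl fun n _ => by rw [hSigT n]
  have hv0 : ∀ n, 0 ≤ v n := by
    intro n
    have := (epT_pos lam x hl (n : ℕ)).inv.posSemidef.dotProduct_mulVec_nonneg (x n)
    simpa [hvdef] using this
  have hv1 : ∀ n, v n ≤ 1 := by
    intro n
    have h1 : v n ≤ (x n ⬝ᵥ x n) / lam :=
      ep_quad_bound lam hl _ (epS_psd x (n : ℕ)) (epT_pos lam x hl (n : ℕ)) (x n)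
    have h2 : (x n ⬝ᵥ x n) / lam ≤ 1 := by
      rw [div_le_one hl]; exact hxx n
    exact le_trans h1 h2
  have h1v : ∀ n : Fin N, (0:ℝ) < 1 + v n := fun n => by linarith [hv0 n]
  -- determinant product at m = N
  have huniv : Finset.univ.filter (fun n : Fin N => (n : ℕ) < N) = Finset.univ := by
    ext i; simp [i.is_lt]
  have hdet : (epT lam x N).det = lam ^ d * ∏ n : Fin N, (1 + v n) := by
    rw [epT_det_prod lam x hl N le_rfl, huniv]
  set P := ∏ n : Fin N, (1 + v n) with hP
  have hPpos : 0 < P := Finset.prod_pos fun n _ => h1v n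
  have hlogP : Real.log P = Real.log ((epT lam x N).det) - d * Real.log lam := by
    rw [hdet, Real.log_mul (by positivity) hPpos.ne', Real.log_pow]
    ring
  -- trace bound
  have htrace : (epT lam x N).trace ≤ lam * (d + N) := by
    rw [epT_trace]
    have hsum : ∑ i ∈ Finset.univ.filter (fun i : Fin N => (i : ℕ) < N), (x i ⬝ᵥ x i)
        ≤ N * lam := by
      rw [huniv]
      calc ∑ i : Fin N, x i ⬝ᵥ x i ≤ ∑ _i : Fin N, lam :=
            Finset.sum_le_sum fun i _ => hxx i
        _ = N * lam := by simp [Finset.card_univ, mul_comm]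
    linarith
  have hdetpos : 0 < (epT lam x N).det := (epT_pos lam x hl N).det_pos
  have htrd : (epT lam x N).trace / d ≤ lam * (1 + (N:ℝ)/d) := by
    rw [div_le_iff₀ hd0]
    calc (epT lam x N).trace ≤ lam * (d + N) := htrace
      _ = lam * (1 + (N:ℝ)/d) * d := by field_simp
  have hdetle : (epT lam x N).det ≤ (lam * (1 + (N:ℝ)/d)) ^ d := by
    calc (epT lam x N).det ≤ ((epT lam x N).trace / d) ^ d :=
          ep_det_le_trace_pow hd _ (epT_pos lam x hl N)
      _ ≤ (lam * (1 + (N:ℝ)/d)) ^ d := by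
          apply pow_le_pow_left₀ _ htrd
          have : 0 < (epT lam x N).trace := by
            calc (0:ℝ) < lam * d := by positivity
              _ ≤ (epT lam x N).trace := by
                  rw [epT_trace]
                  have : 0 ≤ ∑ i ∈ Finset.univ.filter (fun i : Fin N => (i : ℕ) < N),
                      (x i ⬝ᵥ x i) := Finset.sum_nonneg fun i _ => ep_dp_self_nonneg _
                  linarith
          positivity
  have hfac : (0:ℝ) < 1 + (N:ℝ)/d := by positivity
  have hlogdet : Real.log ((epT lam x N).det) ≤
      d * (Real.log lam + Real.log (1 + (N:ℝ)/d)) := by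
    calc Real.log ((epT lam x N).det) ≤ Real.log ((lam * (1 + (N:ℝ)/d)) ^ d) :=
          Real.log_le_log hdetpos hdetle
      _ = d * Real.log (lam * (1 + (N:ℝ)/d)) := by rw [Real.log_pow]
      _ = d * (Real.log lam + Real.log (1 + (N:ℝ)/d)) := by
          rw [Real.log_mul hl.ne' hfac.ne']
  have hlogPle : Real.log P ≤ d * Real.log (1 + (N:ℝ)/d) := by
    rw [hlogP]
    linarith
  -- put everything together
  rw [hLHS]
  calc ∑ n : Fin N, v n ≤ ∑ n : Fin N, 2 * Real.log (1 + v n) :=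
        Finset.sum_le_sum fun n _ => ep_le_two_log (hv0 n) (hv1 n)
    _ = 2 * ∑ n : Fin N, Real.log (1 + v n) := by rw [Finset.mul_sum]
    _ = 2 * Real.log P := by
        rw [hP, Real.log_prod fun n _ => (h1v n).ne']
    _ ≤ 2 * (d * Real.log (1 + (N:ℝ)/d)) := by linarith
    _ = 2 * d * Real.log (1 + (N:ℝ)/d) := by ring
end

section
/- For positive definite Λ = λI + Σ_{i=1}^K φᵢφᵢᵀ with φᵢ ∈ ℝ^d and λ > 0, we have Σ_{i=1}^K φᵢᵀ Λ⁻¹ φᵢ ≤ d. -/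
open Matrix BigOperators

theorem sum_quadform_inv_le_dim
    (d K : ℕ) (lam : ℝ) (hlam : 0 < lam)
    (phi : Fin K → Fin d → ℝ)
    (Lam : Matrix (Fin d) (Fin d) ℝ)
    (hLam : Lam = lam • (1 : Matrix (Fin d) (Fin d) ℝ) +
      ∑ i : Fin K, vecMulVec (phi i) (phi i)) :
    ∑ i : Fin K, phi i ⬝ᵥ Lam⁻¹ *ᵥ phi i ≤ (d : ℝ) := by
  -- The sum of outer products is positive semidefinite
  have hSpsd : (∑ i : Fin K, vecMulVec (phi i) (phi i)).PosSemidef := by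
    refine Finset.sum_induction _ _ (fun A B hA hB => hA.add hB) PosSemidef.zero ?_
    intro i _
    have := posSemidef_self_mul_conjTranspose (replicateCol (Fin 1) (phi i))
    simpa using posSemidef_vecMulVec_self_star (phi i)
  -- lam • 1 is positive definite
  have hsmul : (lam • (1 : Matrix (Fin d) (Fin d) ℝ)).PosDef := by
    refine posDef_iff_dotProduct_mulVec.2 ⟨?_, fun x hx => ?_⟩
    · unfold Matrix.IsHermitian
      ext i j
      simp [Matrix.one_apply, conjTranspose_apply]
      split <;> simp_all [eq_comm]
    · have h1 : star x ⬝ᵥ (lam • (1 : Matrix (Fin d) (Fin d) ℝ)) *ᵥ x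
          = lam * (x ⬝ᵥ star x) := by
        simp [smul_mulVec, dotProduct_smul, smul_eq_mul, dotProduct_comm]
      rw [h1]
      exact mul_pos hlam (dotProduct_self_star_pos_iff.2 hx)
  have hPD : Lam.PosDef := by
    rw [hLam]
    exact hsmul.add_posSemidef hSpsd
  have hPDinv : (Lam⁻¹).PosDef := hPD.inv
  -- quadratic form as trace
  have key : ∀ v : Fin d → ℝ, v ⬝ᵥ Lam⁻¹ *ᵥ v = trace (Lam⁻¹ * vecMulVec v v) := by
    intro v
    simp [trace, Matrix.mul_apply, vecMulVec_apply, dotProduct, mulVec, diag,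
      Finset.mul_sum, Finset.sum_mul]
    exact Finset.sum_congr rfl fun i _ => Finset.sum_congr rfl fun j _ => by ring
  have hsum : ∑ i : Fin K, phi i ⬝ᵥ Lam⁻¹ *ᵥ phi i
      = trace (Lam⁻¹ * ∑ i : Fin K, vecMulVec (phi i) (phi i)) := by
    rw [Finset.mul_sum, trace_sum]
    exact Finset.sum_congr rfl fun i _ => key (phi i)
  have hS : (∑ i : Fin K, vecMulVec (phi i) (phi i))
      = Lam - lam • (1 : Matrix (Fin d) (Fin d) ℝ) := by
    rw [hLam]; abel
  have hinv : Lam⁻¹ * Lam = 1 := nonsing_inv_mul Lam hPD.det_pos.ne'.isUnit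
  have htr : ∑ i : Fin K, phi i ⬝ᵥ Lam⁻¹ *ᵥ phi i
      = (d : ℝ) - lam * trace Lam⁻¹ := by
    rw [hsum, hS, Matrix.mul_sub, trace_sub, hinv, Matrix.mul_smul, trace_smul,
      trace_one]
    simp [smul_eq_mul]
  rw [htr]
  have htrnn : 0 ≤ trace Lam⁻¹ := by
    unfold Matrix.trace
    refine Finset.sum_nonneg fun i _ => ?_
    have := hPDinv.posSemidef.dotProduct_mulVec_nonneg (Pi.single i 1)
    simpa [dotProduct, mulVec, Pi.single_apply, diag] using this
  nlinarith
end

section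
/- Let A = Σ_{n=1}^N xⁿ(xⁿ)ᵀ where each xⁿ ∈ ℝ^d satisfies ‖xⁿ‖ ≤ R, and let λ ≥ R². Then log det(I + (1/λ)A) ≤ d·log(1 + N/d). -/
open Matrix BigOperators Real

lemma trace_eq_sum_eigs {d : ℕ} (M : Matrix (Fin d) (Fin d) ℝ) (hM : M.IsHermitian) :
    M.trace = ∑ i, hM.eigenvalues i := by
  conv_lhs => rw [hM.spectral_theorem, Unitary.conjStarAlgAut_apply]
  rw [Matrix.trace_mul_cycle]
  rw [show (star (hM.eigenvectorUnitary : Matrix (Fin d) (Fin d) ℝ) *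
      (hM.eigenvectorUnitary : Matrix (Fin d) (Fin d) ℝ)) = 1 from
    Matrix.mem_unitaryGroup_iff'.mp hM.eigenvectorUnitary.2, one_mul, Matrix.trace_diagonal]
  simp

lemma psd_vecMulVec {d : ℕ} (x : Fin d → ℝ) : (vecMulVec x x).PosSemidef := by
  rw [Matrix.posSemidef_iff_dotProduct_mulVec]
  constructor
  · ext i j
    simp [Matrix.vecMulVec_apply, mul_comm]
  · intro v
    have : dotProduct (star v) (vecMulVec x x *ᵥ v) = (x ⬝ᵥ v) * (x ⬝ᵥ v) := by
      simp only [dotProduct, Matrix.mulVec, Matrix.vecMulVec_apply, star_trivial,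
        Finset.mul_sum, Finset.sum_mul]
      rw [Finset.sum_comm]
      congr 1; ext i; congr 1; ext j; ring
    rw [this]
    exact mul_self_nonneg _

theorem logdet_bound
    (d N : ℕ) (hd : 1 ≤ d) (R lam : ℝ) (hlam : R ^ 2 ≤ lam)
    (x : Fin N → Fin d → ℝ)
    (hx : ∀ n, Real.sqrt (x n ⬝ᵥ x n) ≤ R)
    (A : Matrix (Fin d) (Fin d) ℝ)
    (hA : A = ∑ n : Fin N, vecMulVec (x n) (x n)) :
    Real.log (Matrix.det ((1 : Matrix (Fin d) (Fin d) ℝ) + lam⁻¹ • A)) ≤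
      (d : ℝ) * Real.log (1 + (N : ℝ) / d) := by
  have hd0 : (0:ℝ) < d := by exact_mod_cast hd
  have hrhs_nonneg : 0 ≤ (d : ℝ) * Real.log (1 + (N : ℝ) / d) := by
    apply mul_nonneg hd0.le
    apply Real.log_nonneg
    have : (0:ℝ) ≤ (N:ℝ)/d := div_nonneg (Nat.cast_nonneg _) hd0.le
    linarith
  rcases eq_or_lt_of_le (le_trans (sq_nonneg R) hlam) with h0 | hlampos
  · simp [← h0]
    exact hrhs_nonneg
  -- A is positive semidefinite
  have hApsd : A.PosSemidef := by
    rw [hA]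
    refine Finset.sum_induction _ _ (fun a b ha hb => ha.add hb) Matrix.PosSemidef.zero
      (fun n _ => psd_vecMulVec (x n))
  set M : Matrix (Fin d) (Fin d) ℝ := 1 + lam⁻¹ • A with hM
  have hsmul : (lam⁻¹ • A).PosSemidef := by
    rw [Matrix.posSemidef_iff_dotProduct_mulVec]
    constructor
    · have := hApsd.1
      ext i j
      have h1 := congrFun (congrFun this i) j
      simp only [Matrix.smul_apply, Matrix.conjTranspose_apply, star_trivial,
        smul_eq_mul] at h1 ⊢
      rw [h1]
    · intro v
      have := (Matrix.posSemidef_iff_dotProduct_mulVec.mp hApsd).2 v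
      simp only [Matrix.smul_mulVec, dotProduct_smul, smul_eq_mul]
      positivity
  have hMpd : M.PosDef := Matrix.PosDef.add_posSemidef Matrix.PosDef.one hsmul
  have hMh : M.IsHermitian := hMpd.isHermitian
  -- trace bound
  have htrA : A.trace ≤ (N : ℝ) * R ^ 2 := by
    rw [hA, Matrix.trace_sum]
    have hterm : ∀ n : Fin N, (vecMulVec (x n) (x n)).trace ≤ R ^ 2 := by
      intro n
      have hxx : (0:ℝ) ≤ x n ⬝ᵥ x n := by
        simpa [dotProduct] using Finset.sum_nonneg
          (fun i _ => mul_self_nonneg (x n i))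
      have h1 : x n ⬝ᵥ x n ≤ R ^ 2 := by
        have := hx n
        nlinarith [Real.sq_sqrt hxx, Real.sqrt_nonneg (x n ⬝ᵥ x n)]
      have : (vecMulVec (x n) (x n)).trace = x n ⬝ᵥ x n := by
        simp [Matrix.trace, Matrix.diag, Matrix.vecMulVec_apply, dotProduct]
      linarith
    calc ∑ n : Fin N, (vecMulVec (x n) (x n)).trace ≤ ∑ n : Fin N, R ^ 2 :=
          Finset.sum_le_sum (fun n _ => hterm n)
      _ = (N : ℝ) * R ^ 2 := by simp [mul_comm]
  have htrM : M.trace ≤ (d : ℝ) + N := by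
    have h1 : M.trace = (d : ℝ) + lam⁻¹ * A.trace := by
      simp [hM, Matrix.trace_add, Matrix.trace_smul, Matrix.trace_one, smul_eq_mul]
    have h2 : lam⁻¹ * A.trace ≤ (N : ℝ) := by
      calc lam⁻¹ * A.trace ≤ lam⁻¹ * ((N:ℝ) * R ^ 2) := by
            apply mul_le_mul_of_nonneg_left htrA (by positivity)
        _ = (N:ℝ) * (R ^ 2 / lam) := by ring
        _ ≤ (N:ℝ) * 1 := by
            apply mul_le_mul_of_nonneg_left _ (Nat.cast_nonneg _)
            exact div_le_one_of_le₀ hlam hlampos.le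
        _ = (N:ℝ) := mul_one _
    linarith
  -- eigenvalues
  set μ := hMh.eigenvalues with hμ
  have hμpos : ∀ i, 0 < μ i := hMpd.eigenvalues_pos
  have hdet : M.det = ∏ i, μ i := by
    simpa using hMh.det_eq_prod_eigenvalues
  have htr : M.trace = ∑ i, μ i := trace_eq_sum_eigs M hMh
  -- Jensen
  have hjensen : ∑ i : Fin d, ((d:ℝ)⁻¹) • Real.log (μ i) ≤
      Real.log (∑ i : Fin d, ((d:ℝ)⁻¹) • μ i) := by
    apply (strictConcaveOn_log_Ioi.concaveOn).le_map_sum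
    · intro i _; positivity
    · simp only [Finset.sum_const, Finset.card_univ, Fintype.card_fin, nsmul_eq_mul]
      field_simp
    · intro i _; exact hμpos i
  have hlogdet : Real.log M.det = ∑ i, Real.log (μ i) := by
    rw [hdet]
    exact Real.log_prod (fun i _ => (hμpos i).ne')
  have key : Real.log M.det ≤ (d:ℝ) * Real.log (M.trace / d) := by
    rw [hlogdet]
    have h1 : ∑ i, Real.log (μ i) = (d:ℝ) * ∑ i : Fin d, ((d:ℝ)⁻¹) • Real.log (μ i) := by
      simp only [smul_eq_mul, Finset.mul_sum, ← mul_assoc]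
      rw [mul_inv_cancel₀ hd0.ne']
      simp
    have h2 : (∑ i : Fin d, ((d:ℝ)⁻¹) • μ i) = M.trace / d := by
      rw [htr]
      simp only [smul_eq_mul]
      rw [← Finset.mul_sum, div_eq_inv_mul]
    rw [h1]
    apply mul_le_mul_of_nonneg_left _ hd0.le
    calc ∑ i : Fin d, ((d:ℝ)⁻¹) • Real.log (μ i)
        ≤ Real.log (∑ i : Fin d, ((d:ℝ)⁻¹) • μ i) := hjensen
      _ = Real.log (M.trace / d) := by rw [h2]
  calc Real.log M.det ≤ (d:ℝ) * Real.log (M.trace / d) := key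
    _ ≤ (d:ℝ) * Real.log (1 + (N:ℝ)/d) := by
        apply mul_le_mul_of_nonneg_left _ hd0.le
        apply Real.log_le_log
        · have : (0:ℝ) < M.trace := by
            rw [htr]
            have : Nonempty (Fin d) := ⟨⟨0, hd⟩⟩
            exact Finset.sum_pos (fun i _ => hμpos i) Finset.univ_nonempty
          exact div_pos this hd0
        · rw [div_le_iff₀ hd0]
          have : (1 + (N:ℝ)/d) * d = d + N := by field_simp
          rw [this]; exact htrM
end

section
/- For any two policies π, π' and reward function r in a finite-horizon MDP with transitions P and horizon H, V^{r,π'} − V^{r,π} = Σ_{h=1}^H E_{s_h ∼ d^{π'}_h} [⟨Q^{r,π}_h(s_h, ·), π'_h(·|s_h) − π_h(·|s_h)⟩], where d^{π'}_h is the state distribution at step h under π'. -/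
open BigOperators Finset

variable {S A : Type*}

/-- Value function from step `h` onward in a finite-horizon MDP. -/
noncomputable def Vfun [Fintype S] [Fintype A] (H : ℕ) (P : ℕ → S → A → S → ℝ)
    (r : ℕ → S → A → ℝ) (pol : ℕ → S → A → ℝ) : ℕ → S → ℝ
  | h, s =>
    if _ : h < H then
      ∑ a, pol h s a * (r h s a + ∑ s', P h s a s' * Vfun H P r pol (h + 1) s')
    else 0
  termination_by h => H - h

/-- Q-function from step `h` onward. -/
noncomputable def Qfun [Fintype S] [Fintype A] (H : ℕ) (P : ℕ → S → A → S → ℝ)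
    (r : ℕ → S → A → ℝ) (pol : ℕ → S → A → ℝ) (h : ℕ) (s : S) (a : A) : ℝ :=
  r h s a + ∑ s', P h s a s' * Vfun H P r pol (h + 1) s'

/-- State visitation distribution at step `h` under policy `pol`. -/
noncomputable def occ [Fintype S] [Fintype A] (P : ℕ → S → A → S → ℝ) (mu : S → ℝ)
    (pol : ℕ → S → A → ℝ) : ℕ → S → ℝ
  | 0, s => mu s
  | h + 1, s => ∑ s', ∑ a', occ P mu pol h s' * pol h s' a' * P h s' a' s

/-- Performance difference lemma. -/
theorem performance_difference [Fintype S] [Fintype A]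
    (H : ℕ) (P : ℕ → S → A → S → ℝ) (mu : S → ℝ)
    (r : ℕ → S → A → ℝ) (pol pol' : ℕ → S → A → ℝ)
    (hmu_nonneg : ∀ s, 0 ≤ mu s) (hmu_sum : ∑ s, mu s = 1)
    (hP_nonneg : ∀ h s a s', 0 ≤ P h s a s')
    (hP_sum : ∀ h s a, ∑ s', P h s a s' = 1)
    (hpol : ∀ h s, (∀ a, 0 ≤ pol h s a) ∧ ∑ a, pol h s a = 1)
    (hpol' : ∀ h s, (∀ a, 0 ≤ pol' h s a) ∧ ∑ a, pol' h s a = 1) :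
    (∑ s, mu s * Vfun H P r pol' 0 s) - (∑ s, mu s * Vfun H P r pol 0 s) =
      ∑ h ∈ Finset.range H, ∑ s, occ P mu pol' h s *
        ∑ a, Qfun H P r pol h s a * (pol' h s a - pol h s a) := by
  -- abbreviations
  set f : ℕ → ℝ := fun h => ∑ s, occ P mu pol' h s * Vfun H P r pol' h s with hf
  set g : ℕ → ℝ := fun h => ∑ s, occ P mu pol' h s * Vfun H P r pol h s with hg
  set R : ℕ → ℝ := fun h => ∑ s, occ P mu pol' h s * ∑ a, pol' h s a * r h s a with hR
  have hVH : ∀ (q : ℕ → S → A → ℝ) (s : S), Vfun H P r q H s = 0 := by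
    intro q s; rw [Vfun]; simp
  have hVlt : ∀ (q : ℕ → S → A → ℝ) (h : ℕ), h < H → ∀ s,
      Vfun H P r q h s = ∑ a, q h s a * (r h s a + ∑ s', P h s a s' * Vfun H P r q (h+1) s') := by
    intro q h hh s; rw [Vfun, dif_pos hh]
  -- exchange lemma
  have hexch : ∀ (h : ℕ) (W : S → ℝ),
      (∑ s, occ P mu pol' h s * ∑ a, pol' h s a * ∑ s', P h s a s' * W s')
        = ∑ s', occ P mu pol' (h+1) s' * W s' := by
    intro h W
    have hocc : ∀ s' : S, occ P mu pol' (h+1) s'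
        = ∑ s, ∑ a, occ P mu pol' h s * pol' h s a * P h s a s' := by
      intro s'; rw [occ]
    simp only [hocc, Finset.sum_mul, Finset.mul_sum, mul_assoc]
    rw [Finset.sum_congr rfl fun (s : S) _ =>
      (Finset.sum_comm (s := (Finset.univ : Finset A)) (t := (Finset.univ : Finset S))
        (f := fun (a : A) (s' : S) => occ P mu pol' h s * (pol' h s a * (P h s a s' * W s')))),
      Finset.sum_comm]
  -- step for f
  have hstep_f : ∀ h ∈ Finset.range H, f h - f (h+1) = R h := by
    intro h hh
    rw [Finset.mem_range] at hh
    have : f h = R h + f (h+1) := by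
      simp only [hf, hR]
      rw [← hexch h (fun s' => Vfun H P r pol' (h+1) s'), ← Finset.sum_add_distrib]
      refine Finset.sum_congr rfl fun s _ => ?_
      rw [hVlt pol' h hh s]
      rw [← mul_add]
      congr 1
      rw [← Finset.sum_add_distrib]
      refine Finset.sum_congr rfl fun a _ => ?_
      ring
    linarith
  -- step for the Q-difference term
  have hstep : ∀ h ∈ Finset.range H,
      (∑ s, occ P mu pol' h s * ∑ a, Qfun H P r pol h s a * (pol' h s a - pol h s a))
        = R h + (g (h+1) - g h) := by
    intro h hh
    rw [Finset.mem_range] at hh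
    have h1 : (∑ s, occ P mu pol' h s * ∑ a, Qfun H P r pol h s a * pol' h s a)
        = R h + g (h+1) := by
      simp only [hR, hg]
      rw [← hexch h (fun s' => Vfun H P r pol (h+1) s'), ← Finset.sum_add_distrib]
      refine Finset.sum_congr rfl fun s _ => ?_
      rw [← mul_add]
      congr 1
      rw [← Finset.sum_add_distrib]
      refine Finset.sum_congr rfl fun a _ => ?_
      simp only [Qfun, add_mul, Finset.sum_mul, Finset.mul_sum]
      congr 1
      · exact mul_comm _ _
      · exact Finset.sum_congr rfl fun s' _ => by ring
    have h2 : (∑ s, occ P mu pol' h s * ∑ a, Qfun H P r pol h s a * pol h s a) = g h := by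
      simp only [hg]
      refine Finset.sum_congr rfl fun s _ => ?_
      congr 1
      rw [hVlt pol h hh s]
      refine Finset.sum_congr rfl fun a _ => ?_
      simp only [Qfun]; ring
    calc (∑ s, occ P mu pol' h s * ∑ a, Qfun H P r pol h s a * (pol' h s a - pol h s a))
        = (∑ s, occ P mu pol' h s * ∑ a, Qfun H P r pol h s a * pol' h s a)
          - (∑ s, occ P mu pol' h s * ∑ a, Qfun H P r pol h s a * pol h s a) := by
          rw [← Finset.sum_sub_distrib]
          refine Finset.sum_congr rfl fun s _ => ?_
          rw [← mul_sub, ← Finset.sum_sub_distrib]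
          congr 1
          exact Finset.sum_congr rfl fun a _ => by ring
      _ = R h + (g (h+1) - g h) := by rw [h1, h2]; ring
  -- telescoping
  have htel_f : ∑ h ∈ Finset.range H, (f h - f (h+1)) = f 0 - f H :=
    Finset.sum_range_sub' f H
  have htel_g : ∑ h ∈ Finset.range H, (g (h+1) - g h) = g H - g 0 :=
    Finset.sum_range_sub g H
  have hfH : f H = 0 := by simp [hf, hVH]
  have hgH : g H = 0 := by simp [hg, hVH]
  have hf0 : f 0 = ∑ h ∈ Finset.range H, R h := by
    rw [← Finset.sum_congr rfl hstep_f, htel_f, hfH, sub_zero]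
  have hLHS' : (∑ s, mu s * Vfun H P r pol' 0 s) = f 0 := by
    simp only [hf]; rfl
  have hLHS : (∑ s, mu s * Vfun H P r pol 0 s) = g 0 := by
    simp only [hg]; rfl
  rw [hLHS, hLHS', Finset.sum_congr rfl hstep, Finset.sum_add_distrib, htel_g, hgH, hf0]
  ring
end

section
/- Let A be a finite set, and let x, x' : A → ℝ satisfy |x(a) − x'(a)| ≤ c for all a ∈ A. Define softmax distributions p(a) = exp(x(a))/Σ_{a'} exp(x(a')) and p'(a) = exp(x'(a))/Σ_{a'} exp(x'(a')). Then ‖p − p'‖₁ ≤ exp(2c) − 1. -/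
open BigOperators Finset Real

/-- Total variation distance between two softmax distributions with pointwise-close logits. -/
theorem softmax_tv_bound
    {A : Type*} [Fintype A] [Nonempty A]
    (c : ℝ) (hc : 0 ≤ c) (x x' : A → ℝ)
    (hclose : ∀ a, |x a - x' a| ≤ c) :
    ∑ a, |Real.exp (x a) / (∑ a', Real.exp (x a')) -
          Real.exp (x' a) / (∑ a', Real.exp (x' a'))| ≤ Real.exp (2 * c) - 1 := by
  set S := ∑ a', Real.exp (x a') with hS
  set S' := ∑ a', Real.exp (x' a') with hS'
  have hSpos : 0 < S := Finset.sum_pos (fun a _ => Real.exp_pos _) Finset.univ_nonempty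
  have hS'pos : 0 < S' := Finset.sum_pos (fun a _ => Real.exp_pos _) Finset.univ_nonempty
  have hSle : S ≤ Real.exp c * S' := by
    rw [hS, hS', Finset.mul_sum]
    refine Finset.sum_le_sum fun i _ => ?_
    rw [← Real.exp_add]
    exact Real.exp_le_exp.2 (by have := (abs_le.1 (hclose i)).2; linarith)
  have hS'le : S' ≤ Real.exp c * S := by
    rw [hS, hS', Finset.mul_sum]
    refine Finset.sum_le_sum fun i _ => ?_
    rw [← Real.exp_add]
    exact Real.exp_le_exp.2 (by have := (abs_le.1 (hclose i)).1; linarith)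
  have hexp2 : Real.exp (2 * c) = Real.exp c * Real.exp c := by
    rw [← Real.exp_add]; ring_nf
  have key : ∀ a, Real.exp (x a) / S ≤ Real.exp (2 * c) * (Real.exp (x' a) / S') := by
    intro a
    have hxa : Real.exp (x a) ≤ Real.exp c * Real.exp (x' a) := by
      rw [← Real.exp_add]
      exact Real.exp_le_exp.2 (by have := (abs_le.1 (hclose a)).2; linarith)
    rw [← mul_div_assoc, div_le_div_iff₀ hSpos hS'pos, hexp2]
    nlinarith [Real.exp_pos c, Real.exp_pos (x a), Real.exp_pos (x' a),
      mul_le_mul hxa hS'le hS'pos.le (by positivity)]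
  have key' : ∀ a, Real.exp (x' a) / S' ≤ Real.exp (2 * c) * (Real.exp (x a) / S) := by
    intro a
    have hxa : Real.exp (x' a) ≤ Real.exp c * Real.exp (x a) := by
      rw [← Real.exp_add]
      exact Real.exp_le_exp.2 (by have := (abs_le.1 (hclose a)).1; linarith)
    rw [← mul_div_assoc, div_le_div_iff₀ hS'pos hSpos, hexp2]
    nlinarith [Real.exp_pos c, Real.exp_pos (x a), Real.exp_pos (x' a),
      mul_le_mul hxa hSle hSpos.le (by positivity)]
  have hpt : ∀ a, |Real.exp (x a) / S - Real.exp (x' a) / S'| ≤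
      (Real.exp (2 * c) - 1) * min (Real.exp (x a) / S) (Real.exp (x' a) / S') := by
    intro a
    rcases le_total (Real.exp (x a) / S) (Real.exp (x' a) / S') with h | h
    · rw [abs_of_nonpos (by linarith), min_eq_left h]
      have := key' a; linarith
    · rw [abs_of_nonneg (by linarith), min_eq_right h]
      have := key a; linarith
  have hone : ∑ a, Real.exp (x a) / S = 1 := by
    rw [← Finset.sum_div, ← hS, div_self hSpos.ne']
  calc ∑ a, |Real.exp (x a) / S - Real.exp (x' a) / S'|
      ≤ ∑ a, (Real.exp (2 * c) - 1) * min (Real.exp (x a) / S) (Real.exp (x' a) / S') :=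
        Finset.sum_le_sum fun a _ => hpt a
    _ = (Real.exp (2 * c) - 1) * ∑ a, min (Real.exp (x a) / S) (Real.exp (x' a) / S') := by
        rw [← Finset.mul_sum]
    _ ≤ (Real.exp (2 * c) - 1) * ∑ a, Real.exp (x a) / S := by
        refine mul_le_mul_of_nonneg_left
          (Finset.sum_le_sum fun a _ => min_le_left _ _) ?_
        have : (1:ℝ) ≤ Real.exp (2 * c) := Real.one_le_exp (by linarith)
        linarith
    _ = Real.exp (2 * c) - 1 := by rw [hone, mul_one]
end
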